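/- Let λ > 0 and κ ∈ (0,1). Then for every z ∈ [0,1], exp(−λ(1 − (1−κ)z/(1−κz))) = e^{−λ} + e^{−λ} ∑_{m=1}^∞ (∑_{s=0}^{m−1} (λ^{s+1}/(s+1)!) · C(m−1, s) · κ^{m−s−1} (1−κ)^{s+1}) z^m, where C(m−1,s) denotes the binomial coefficient. In particular the probabilities of the positive discrete stable distribution PDS(1,λ,κ) are P(X=0) = e^{−λ} and P(X=m) = e^{−λ} ∑_{s=0}^{m−1} (λ^{s+1}/(s+1)!) C(m−1,s) κ^{m−s−1}(1−κ)^{s+1} for m ≥ 1. -/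

import Mathlib

open Finset

/-- Diagonal reindexing of a summable double series over `ℕ × ℕ`. -/
lemma tsum_range_eq_tsum_prod (F : ℕ × ℕ → ℝ) (h : Summable F) :
    ∑' n : ℕ, ∑ k ∈ Finset.range (n + 1), F (k, n - k) = ∑' p : ℕ × ℕ, F p := by
  simp_rw [← Finset.Nat.sum_antidiagonal_eq_sum_range_succ fun k l ↦ F (k, l)]
  conv_lhs => enter [1, n]; rw [← Finset.sum_finset_coe, ← tsum_fintype (L := .unconditional _)]
  rw [← Finset.HasAntidiagonal.sigmaAntidiagonalEquivProd.tsum_eq F]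
  exact (Summable.tsum_sigma' (fun n ↦ (hasSum_fintype _).summable)
    (Finset.HasAntidiagonal.sigmaAntidiagonalEquivProd.summable_iff.mpr h)).symm

/-- Power-series expansion of the PGF of the positive discrete stable
distribution `PDS(1,λ,κ)`: its probabilities are `P(X=0) = e^{-λ}` and
`P(X=m) = e^{-λ} ∑_{s=0}^{m-1} (λ^{s+1}/(s+1)!) C(m-1,s) κ^{m-s-1}(1-κ)^{s+1}`. -/
theorem pds_one_probabilities (lam κ : ℝ) (hlam : 0 < lam)
    (hκ : κ ∈ Set.Ioo (0 : ℝ) 1) (z : ℝ) (hz : z ∈ Set.Icc (0 : ℝ) 1) :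
    Real.exp (-lam * (1 - (1 - κ) * z / (1 - κ * z)))
      = Real.exp (-lam) + Real.exp (-lam) *
        ∑' m : ℕ, (∑ s ∈ Finset.range (m + 1),
            lam ^ (s + 1) / (Nat.factorial (s + 1)) * (Nat.choose m s) *
              κ ^ (m - s) * (1 - κ) ^ (s + 1)) * z ^ (m + 1) := by
  obtain ⟨hκ0, hκ1⟩ := hκ
  obtain ⟨hz0, hz1⟩ := hz
  have hκz0 : 0 ≤ κ * z := mul_nonneg hκ0.le hz0
  have hκz1 : κ * z < 1 := lt_of_le_of_lt (mul_le_of_le_one_right hκ0.le hz1) hκ1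
  have hne : (1 : ℝ) - κ * z ≠ 0 := by linarith
  set w : ℝ := lam * (1 - κ) * z / (1 - κ * z) with hw
  -- the double-indexed family
  set F : ℕ × ℕ → ℝ := fun p ↦
    lam ^ (p.1 + 1) / (Nat.factorial (p.1 + 1)) * ((p.1 + p.2).choose p.1) *
      κ ^ p.2 * (1 - κ) ^ (p.1 + 1) * z ^ (p.1 + p.2 + 1) with hF
  -- row sums
  have hrow : ∀ s : ℕ, HasSum (fun j ↦ F (s, j)) (w ^ (s + 1) / (Nat.factorial (s + 1))) := by
    intro s
    have hnorm : ‖κ * z‖ < 1 := by rwa [Real.norm_eq_abs, abs_of_nonneg hκz0]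
    have h := (hasSum_choose_mul_geometric_of_norm_lt_one (r := κ * z) s hnorm).mul_left
      (lam ^ (s + 1) / (Nat.factorial (s + 1)) * (1 - κ) ^ (s + 1) * z ^ (s + 1))
    have heq : (fun j ↦ lam ^ (s + 1) / (Nat.factorial (s + 1)) * (1 - κ) ^ (s + 1) * z ^ (s + 1)
        * (((j + s).choose s : ℝ) * (κ * z) ^ j)) = fun j ↦ F (s, j) := by
      funext j
      simp only [hF, Nat.add_comm j s]
      rw [mul_pow]
      ring
    rw [heq] at h
    convert h using 1
    · rfl
    rw [hw, div_pow, mul_pow, mul_pow]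
    ring
  have hrow_sum : ∀ s : ℕ, ∑' j, F (s, j) = w ^ (s + 1) / (Nat.factorial (s + 1)) :=
    fun s ↦ (hrow s).tsum_eq
  -- summability of the shifted exponential series
  have hshift : Summable (fun s : ℕ ↦ w ^ (s + 1) / (Nat.factorial (s + 1) : ℝ)) := by
    have := (Real.summable_pow_div_factorial w).comp_injective Nat.succ_injective
    exact this
  -- summability of F
  have hFnn : 0 ≤ F := by
    intro p
    have h1κ : (0:ℝ) ≤ 1 - κ := by linarith
    exact mul_nonneg (mul_nonneg (mul_nonneg (mul_nonneg
      (div_nonneg (pow_nonneg hlam.le _) (Nat.cast_nonneg _)) (Nat.cast_nonneg _))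
      (pow_nonneg hκ0.le _)) (pow_nonneg h1κ _)) (pow_nonneg hz0 _)
  have hFsum : Summable F := by
    rw [summable_prod_of_nonneg hFnn]
    refine ⟨fun s ↦ (hrow s).summable, ?_⟩
    simpa only [hrow_sum] using hshift
  -- exp w as a series
  have hexp : Real.exp w = 1 + ∑' s : ℕ, w ^ (s + 1) / (Nat.factorial (s + 1)) := by
    have h0 : Real.exp w = ∑' n : ℕ, w ^ n / (Nat.factorial n) := by
      rw [Real.exp_eq_exp_ℝ, NormedSpace.exp_eq_tsum_div]
    rw [h0, Summable.tsum_eq_zero_add (Real.summable_pow_div_factorial w)]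
    simp
  -- identify the series in the statement with F
  have hT : ∑' m : ℕ, (∑ s ∈ Finset.range (m + 1),
      lam ^ (s + 1) / (Nat.factorial (s + 1)) * (Nat.choose m s) *
        κ ^ (m - s) * (1 - κ) ^ (s + 1)) * z ^ (m + 1)
      = ∑' s : ℕ, w ^ (s + 1) / (Nat.factorial (s + 1)) := by
    have h1 : ∀ m : ℕ, (∑ s ∈ Finset.range (m + 1),
        lam ^ (s + 1) / (Nat.factorial (s + 1)) * (Nat.choose m s) *
          κ ^ (m - s) * (1 - κ) ^ (s + 1)) * z ^ (m + 1)
        = ∑ s ∈ Finset.range (m + 1), F (s, m - s) := by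
      intro m
      rw [Finset.sum_mul]
      refine Finset.sum_congr rfl fun s hs ↦ ?_
      have hsm : s ≤ m := Nat.lt_succ_iff.mp (Finset.mem_range.mp hs)
      simp only [hF, Nat.add_sub_cancel' hsm]
    calc ∑' m : ℕ, (∑ s ∈ Finset.range (m + 1),
            lam ^ (s + 1) / (Nat.factorial (s + 1)) * (Nat.choose m s) *
              κ ^ (m - s) * (1 - κ) ^ (s + 1)) * z ^ (m + 1)
        = ∑' m : ℕ, ∑ s ∈ Finset.range (m + 1), F (s, m - s) := by
          exact tsum_congr h1
      _ = ∑' p : ℕ × ℕ, F p := tsum_range_eq_tsum_prod F hFsum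
      _ = ∑' s : ℕ, ∑' j : ℕ, F (s, j) :=
          Summable.tsum_prod' hFsum fun s ↦ (hrow s).summable
      _ = ∑' s : ℕ, w ^ (s + 1) / (Nat.factorial (s + 1)) := tsum_congr hrow_sum
  -- final assembly
  have harg : -lam * (1 - (1 - κ) * z / (1 - κ * z)) = -lam + w := by
    rw [hw]; field_simp; ring
  rw [harg, Real.exp_add, hT, hexp]
  ring
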